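/- Let G be a control flow graph with entry node v₀. The collection of intervals constructed by the iterative header-selection procedure — start with header set H = {v₀}; for each header h form I(h) by repeatedly adding any node not yet in any interval all of whose immediate predecessors already lie in I(h); then add to H every node not in any interval that has at least one immediate predecessor inside the just-computed interval and at least one outside it; repeat until no headers remain — is a family of pairwise disjoint sets whose union is all of V. That is, every node of G belongs to exactly one of the constructed intervals. -/
import Mathlib


/-- A directed graph with a distinguished set of vertices and an entry node,
used to model control flow graphs. -/
structure CFGraph (α : Type*) where
  verts : Set α
  Edge : α → α → Prop
  entry : α

namespace CFGraph

variable {α : Type*}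

/-- `G` is a control flow graph: the entry node is a vertex, edges join vertices,
and every vertex is reachable from the entry node. -/
def IsCFG (G : CFGraph α) : Prop :=
  G.entry ∈ G.verts ∧ (∀ u v, G.Edge u v → u ∈ G.verts ∧ v ∈ G.verts) ∧
    ∀ v ∈ G.verts, Relation.ReflTransGen G.Edge G.entry v

/-- A closed path: a path (consecutive nodes are joined by edges) of length at least
two whose first and last nodes coincide. -/
def IsClosedPath (G : CFGraph α) (p : List α) : Prop :=
  p.Chain' G.Edge ∧ 2 ≤ p.length ∧ p.head? = p.getLast?

/-- `e` is an entry node of the set `S`: `e ∈ S` and either `e` is the entry node of the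
graph or some immediate predecessor of `e` lies outside `S`. -/
def IsEntry (G : CFGraph α) (S : Set α) (e : α) : Prop :=
  e ∈ S ∧ (e = G.entry ∨ ∃ u ∈ G.verts, u ∉ S ∧ G.Edge u e)

/-- `S` is a single-entry region with header `h` in which every closed path contains `h`. -/
def IntervalProp (G : CFGraph α) (h : α) (S : Set α) : Prop :=
  S ⊆ G.verts ∧ h ∈ S ∧ (∀ e, G.IsEntry S e ↔ e = h) ∧
    ∀ p : List α, G.IsClosedPath p → (∀ v ∈ p, v ∈ S) → h ∈ p

/-- `S` is an interval with header `h`: a maximal set containing `h` such that `h` is the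
unique entry node of `S` and every closed path lying within `S` contains `h`. -/
def IsInterval (G : CFGraph α) (h : α) (S : Set α) : Prop :=
  G.IntervalProp h S ∧ ∀ T, G.IntervalProp h T → S ⊆ T → T = S

/-- `P` is a partition of the vertices of `G` into intervals. -/
def IsIntervalPartition (G : CFGraph α) (P : Set (Set α)) : Prop :=
  (∀ S ∈ P, ∃ h, G.IsInterval h S) ∧ P.PairwiseDisjoint id ∧ ⋃₀ P = G.verts

/-- `L` is a loop structure with header `h`: `h ∈ L`, there is a back edge from some
`m ∈ L` to `h`, every node of `L` other than `h` has all its immediate predecessors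
inside `L`, and every node of `L` lies on a path within `L` starting at `h`. -/
def IsLoop (G : CFGraph α) (h : α) (L : Set α) : Prop :=
  L ⊆ G.verts ∧ h ∈ L ∧ (∃ m ∈ L, G.Edge m h) ∧
    (∀ v ∈ L, v ≠ h → ∀ u, G.Edge u v → u ∈ L) ∧
    ∀ v ∈ L, Relation.ReflTransGen (fun a b => G.Edge a b ∧ a ∈ L ∧ b ∈ L) h v

/-- The loop `L` with header `h` contains no inner loop construct: every closed path
lying entirely within `L` contains `h`. -/
def NoInnerLoop (G : CFGraph α) (h : α) (L : Set α) : Prop :=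
  ∀ p : List α, G.IsClosedPath p → (∀ v ∈ p, v ∈ L) → h ∈ p

end CFGraph

namespace CFGraph

variable {α : Type*}

/-- Membership in the interval grown from header `h`, given that the nodes in `C`
already belong to previously constructed intervals: starting from `h`, repeatedly add
any node (not already in some interval) all of whose immediate predecessors already lie
in the interval. -/
inductive IntMem (G : CFGraph α) (C : Set α) (h : α) : α → Prop
  | head : IntMem G C h h
  | step (v : α) (hv : v ∈ G.verts) (hvC : v ∉ C)
      (hpre : ∀ u, G.Edge u v → IntMem G C h u) : IntMem G C h v

/-- The interval constructed from header `h`, given already-covered nodes `C`. -/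
def intervalOf (G : CFGraph α) (C : Set α) (h : α) : Set α := {v | IntMem G C h v}

/-- The new headers produced after computing an interval `I`: nodes not in any interval
(`C` is the set of covered nodes, including `I`) having at least one immediate
predecessor inside the just-computed interval `I` and at least one outside it. -/
def newHeaders (G : CFGraph α) (C : Set α) (I : Set α) : Set α :=
  {v | v ∈ G.verts ∧ v ∉ C ∧ (∃ m₁, G.Edge m₁ v ∧ m₁ ∈ I) ∧ ∃ m₂, G.Edge m₂ v ∧ m₂ ∉ I}

/-- `Run G H C 𝒮`: starting from the pending header set `H` and covered node set `C`,
the iterative header-selection procedure can terminate (with no headers remaining)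
having constructed precisely the collection `𝒮` of further intervals. -/
inductive Run (G : CFGraph α) : Set α → Set α → Set (Set α) → Prop
  | done (C : Set α) : Run G ∅ C ∅
  | step (H C : Set α) (h : α) (𝒮 : Set (Set α)) (hh : h ∈ H)
      (hrest : Run G ((H \ {h}) ∪ newHeaders G (C ∪ intervalOf G C h) (intervalOf G C h))
        (C ∪ intervalOf G C h) 𝒮) :
      Run G H C (insert (intervalOf G C h) 𝒮)

end CFGraph

namespace CFGraph

variable {α : Type*}

/-- Invariant maintained by the header-selection procedure. -/
def Inv (G : CFGraph α) (H C : Set α) : Prop :=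
  (∀ x ∈ H, x ∈ G.verts ∧ x ∉ C) ∧
  (∀ u v, G.Edge u v → u ∈ C → v ∈ C ∨ v ∈ H) ∧
  ((H = {G.entry} ∧ C = ∅) ∨ (G.entry ∈ C ∧ ∀ x ∈ H, ∃ u, u ∈ C ∧ G.Edge u x))

lemma intMem_cases {G : CFGraph α} {C : Set α} {h v : α} (hv : IntMem G C h v) :
    v = h ∨ (v ∈ G.verts ∧ v ∉ C) := by
  cases hv with
  | head => exact Or.inl rfl
  | step v hv hvC _ => exact Or.inr ⟨hv, hvC⟩

lemma intervalOf_subset {G : CFGraph α} {C : Set α} {h : α}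
    (hhv : h ∈ G.verts) (hhC : h ∉ C) :
    intervalOf G C h ⊆ G.verts \ C := by
  intro v hv
  rcases intMem_cases hv with rfl | ⟨h1, h2⟩
  · exact ⟨hhv, hhC⟩
  · exact ⟨h1, h2⟩

/-- A pending header other than the processed one is never absorbed into the
interval being grown. -/
lemma header_not_absorbed {G : CFGraph α} {H C : Set α} {h x : α}
    (hinv : Inv G H C) (hh : h ∈ H) (hx : x ∈ H) (hne : x ≠ h) :
    x ∉ intervalOf G C h := by
  intro hxI
  cases hxI with
  | head => exact hne rfl
  | step v hv hvC hpre =>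
    rcases hinv.2.2 with ⟨hH, hC⟩ | ⟨_, hpred⟩
    · rw [hH] at hh hx
      exact hne (hx.trans hh.symm)
    · obtain ⟨u, huC, hedge⟩ := hpred x hx
      rcases intMem_cases (hpre u hedge) with rfl | ⟨_, huC'⟩
      · exact (hinv.1 _ hh).2 huC
      · exact huC' huC

lemma inv_step (G : CFGraph α) (hG : G.IsCFG) {H C : Set α} {h : α}
    (hinv : Inv G H C) (hh : h ∈ H) :
    Inv G ((H \ {h}) ∪ newHeaders G (C ∪ intervalOf G C h) (intervalOf G C h))
      (C ∪ intervalOf G C h) := by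
  obtain ⟨hhv, hhC⟩ := hinv.1 h hh
  have hIsub := intervalOf_subset (G := G) (C := C) hhv hhC
  refine ⟨?_, ?_, ?_⟩
  · rintro x (⟨hxH, hxh⟩ | ⟨hxv, hxC, _, _⟩)
    · refine ⟨(hinv.1 x hxH).1, ?_⟩
      rintro (hxC | hxI)
      · exact (hinv.1 x hxH).2 hxC
      · exact header_not_absorbed hinv hh hxH (by simpa using hxh) hxI
    · exact ⟨hxv, hxC⟩
  · rintro u v hedge (huC | huI)
    · rcases hinv.2.1 u v hedge huC with hvC | hvH
      · exact Or.inl (Or.inl hvC)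
      · by_cases hvI : v ∈ intervalOf G C h
        · exact Or.inl (Or.inr hvI)
        · refine Or.inr (Or.inl ⟨hvH, ?_⟩)
          simp only [Set.mem_singleton_iff]
          rintro rfl
          exact hvI IntMem.head
    · by_cases hvC' : v ∈ C ∪ intervalOf G C h
      · exact Or.inl hvC'
      · refine Or.inr (Or.inr ⟨(hG.2.1 u v hedge).2, hvC', ⟨u, hedge, huI⟩, ?_⟩)
        by_contra hall
        push_neg at hall
        apply hvC'
        refine Or.inr (IntMem.step v (hG.2.1 u v hedge).2
          (fun hvC => hvC' (Or.inl hvC)) ?_)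
        intro w hw
        exact hall w hw
  · refine Or.inr ⟨?_, ?_⟩
    · rcases hinv.2.2 with ⟨hH, _⟩ | ⟨heC, _⟩
      · rw [hH] at hh
        rcases hh with rfl
        exact Or.inr IntMem.head
      · exact Or.inl heC
    · rintro x (⟨hxH, hxh⟩ | ⟨_, _, ⟨m, hm, hmI⟩, _⟩)
      · rcases hinv.2.2 with ⟨hH, _⟩ | ⟨_, hpred⟩
        · rw [hH] at hh hxH
          exact absurd (hxH.trans hh.symm) (by simpa using hxh)
        · obtain ⟨u, huC, hedge⟩ := hpred x hxH
          exact ⟨u, Or.inl huC, hedge⟩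
      · exact ⟨m, Or.inr hmI, hm⟩

lemma run_main (G : CFGraph α) (hG : G.IsCFG) {H C : Set α} {𝒮 : Set (Set α)}
    (hrun : Run G H C 𝒮) :
    Inv G H C →
      (∀ S ∈ 𝒮, S ⊆ G.verts \ C) ∧ 𝒮.PairwiseDisjoint id ∧ G.verts ⊆ C ∪ ⋃₀ 𝒮 := by
  induction hrun with
  | done C =>
    intro hinv
    refine ⟨by simp, by simp, ?_⟩
    have hentry : G.entry ∈ C := by
      rcases hinv.2.2 with ⟨hH, _⟩ | ⟨heC, _⟩
      · exact absurd (hH ▸ rfl : G.entry ∈ (∅ : Set α)) (Set.notMem_empty _)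
      · exact heC
    have key : ∀ v, Relation.ReflTransGen G.Edge G.entry v → v ∈ C := by
      intro v hr
      induction hr with
      | refl => exact hentry
      | tail _ hedge ih =>
        rcases hinv.2.1 _ _ hedge ih with h | h
        · exact h
        · exact absurd h (Set.notMem_empty _)
    exact fun v hv => Or.inl (key v (hG.2.2 v hv))
  | step H C h 𝒮 hh hrest ih =>
    intro hinv
    obtain ⟨hhv, hhC⟩ := hinv.1 h hh
    have hIsub := intervalOf_subset (G := G) (C := C) hhv hhC
    obtain ⟨hsub, hpd, hcov⟩ := ih (inv_step G hG hinv hh)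
    refine ⟨?_, ?_, ?_⟩
    · rintro S (rfl | hS)
      · exact hIsub
      · intro x hx
        obtain ⟨hx1, hx2⟩ := hsub S hS hx
        exact ⟨hx1, fun hxC => hx2 (Or.inl hxC)⟩
    · refine hpd.insert ?_
      intro S hS _
      rw [Set.disjoint_left]
      intro x hxI hxS
      exact (hsub S hS hxS).2 (Or.inr hxI)
    · rw [Set.sUnion_insert]
      intro v hv
      rcases hcov hv with (hvC | hvI) | hvU
      · exact Or.inl hvC
      · exact Or.inr (Or.inl hvI)
      · exact Or.inr (Or.inr hvU)

end CFGraph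

open CFGraph in
/-- Let `G` be a control flow graph with entry node `v₀`.  The
collection `𝒮` of intervals constructed by the iterative header-selection procedure
(starting with header set `{v₀}` and nothing covered) is a family of pairwise disjoint
sets whose union is all of `V`; that is, every node of `G` belongs to exactly one of
the constructed intervals. -/
theorem run_is_partition {α : Type*} (G : CFGraph α) (hG : G.IsCFG)
    (𝒮 : Set (Set α)) (hrun : Run G {G.entry} ∅ 𝒮) :
    𝒮.PairwiseDisjoint id ∧ ⋃₀ 𝒮 = G.verts := by
  have hinv : Inv G {G.entry} ∅ :=
    ⟨fun x hx => ⟨by rcases hx with rfl; exact hG.1, Set.notMem_empty x⟩,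
      fun u v _ hu => absurd hu (Set.notMem_empty u), Or.inl ⟨rfl, rfl⟩⟩
  obtain ⟨hsub, hpd, hcov⟩ := run_main G hG hrun hinv
  refine ⟨hpd, Set.Subset.antisymm ?_ ?_⟩
  · intro x hx
    obtain ⟨S, hS, hxS⟩ := hx
    exact (hsub S hS hxS).1
  · intro v hv
    rcases hcov hv with h | h
    · exact absurd h (Set.notMem_empty v)
    · exact h
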